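/- If f : ℝ → ℝ is a diffeomorphism whose derivative is either everywhere strictly positive or everywhere strictly negative, then for h̃(x,y) = (f(x), f(y)) the Weyl-averaged map G = (1/6) Σ_k σ_k⁻¹ h̃ σ_k on ℝ² has everywhere nonvanishing Jacobian determinant (1/3)(f'(x)f'(y) + f'(y)f'(z) + f'(z)f'(x)) with z = −x−y, hence G is a local diffeomorphism; since ℝ² is simply connected, G is a diffeomorphism of ℝ². -/

import Mathlib

open Matrix

/-- Lift a point of the Lie algebra of the diagonal torus of `SU(3)`
(coordinates `(x, y)` with `z = −x−y`) to its three coordinates. -/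
noncomputable def weylCoords (θ : Fin 2 → ℝ) : Fin 3 → ℝ := ![θ 0, θ 1, -θ 0 - θ 1]

/-- The action of the Weyl group `S_3` on `ℝ²` by permuting `(x, y, z)`. -/
noncomputable def weylAct (σ : Equiv.Perm (Fin 3)) (θ : Fin 2 → ℝ) : Fin 2 → ℝ :=
  fun i => weylCoords θ (σ⁻¹ i.castSucc)

/-- The Weyl-group average `G = (1/6) Σ_k σ_k⁻¹ ∘ h̃ ∘ σ_k`. -/
noncomputable def weylAverage (h : (Fin 2 → ℝ) → (Fin 2 → ℝ)) :
    (Fin 2 → ℝ) → (Fin 2 → ℝ) :=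
  fun θ => (6 : ℝ)⁻¹ • ∑ σ : Equiv.Perm (Fin 3), weylAct σ⁻¹ (h (weylAct σ θ))

/-! ### Auxiliary material -/

section Aux

open Equiv

/-- The explicit form of the Weyl average of `h̃(x,y) = (f x, f y)`. -/
noncomputable def GmapAux (f : ℝ → ℝ) : (Fin 2 → ℝ) → (Fin 2 → ℝ) := fun θ =>
  ![(3:ℝ)⁻¹ * (2 * f (θ 0) - f (θ 1) - f (-θ 0 - θ 1)),
    (3:ℝ)⁻¹ * (2 * f (θ 1) - f (θ 0) - f (-θ 0 - θ 1))]

lemma perm3_univAux : (Finset.univ : Finset (Equiv.Perm (Fin 3))) =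
    {1, swap 0 1, swap 0 2, swap 1 2, swap 0 1 * swap 1 2, swap 0 2 * swap 1 2} := by decide

lemma weylAverage_eqAux (f : ℝ → ℝ) :
    weylAverage (fun θ i => f (θ i)) = GmapAux f := by
  funext θ i
  rw [weylAverage, perm3_univAux]
  rw [Finset.sum_insert (by decide), Finset.sum_insert (by decide),
    Finset.sum_insert (by decide), Finset.sum_insert (by decide),
    Finset.sum_insert (by decide), Finset.sum_singleton]
  fin_cases i <;>
    simp [GmapAux, weylAct, weylCoords, show ((1 : Perm (Fin 3))⁻¹ : Perm (Fin 3)) = 1 from rfl,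
      Equiv.swap_apply_def, _root_.mul_inv_rev] <;> ring

lemma sum_prod_posAux {a b c : ℝ}
    (h : (0 < a ∧ 0 < b ∧ 0 < c) ∨ (a < 0 ∧ b < 0 ∧ c < 0)) :
    0 < a * b + b * c + c * a := by
  rcases h with ⟨ha, hb, hc⟩ | ⟨ha, hb, hc⟩ <;> nlinarith

noncomputable def prAux (i : Fin 2) : (Fin 2 → ℝ) →L[ℝ] ℝ :=
  ContinuousLinearMap.proj i

/-- The Jacobian of `GmapAux f` at `θ` as a continuous linear map. -/
noncomputable def DmapAux (f : ℝ → ℝ) (θ : Fin 2 → ℝ) : (Fin 2 → ℝ) →L[ℝ] (Fin 2 → ℝ) :=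
  ContinuousLinearMap.pi
    ![(3:ℝ)⁻¹ • ((2:ℝ) • (deriv f (θ 0) • prAux 0) - deriv f (θ 1) • prAux 1 -
        deriv f (-θ 0 - θ 1) • (-prAux 0 - prAux 1)),
      (3:ℝ)⁻¹ • ((2:ℝ) • (deriv f (θ 1) • prAux 1) - deriv f (θ 0) • prAux 0 -
        deriv f (-θ 0 - θ 1) • (-prAux 0 - prAux 1))]

lemma GmapAux_hasFDerivAt (f : ℝ → ℝ) (hf : ContDiff ℝ 1 f) (θ : Fin 2 → ℝ) :
    HasFDerivAt (GmapAux f) (DmapAux f θ) θ := by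
  have hd : ∀ x, HasDerivAt f (deriv f x) x := fun x =>
    ((hf.differentiable one_ne_zero) x).hasDerivAt
  have h0 : HasFDerivAt (fun θ : Fin 2 → ℝ => f (θ 0)) (deriv f (θ 0) • prAux 0) θ :=
    (hd (θ 0)).comp_hasFDerivAt θ (prAux 0).hasFDerivAt
  have h1 : HasFDerivAt (fun θ : Fin 2 → ℝ => f (θ 1)) (deriv f (θ 1) • prAux 1) θ :=
    (hd (θ 1)).comp_hasFDerivAt θ (prAux 1).hasFDerivAt
  have hz : HasFDerivAt (fun θ : Fin 2 → ℝ => -θ 0 - θ 1) (-prAux 0 - prAux 1) θ :=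
    ((prAux 0).hasFDerivAt.neg).sub (prAux 1).hasFDerivAt
  have h2 : HasFDerivAt (fun θ : Fin 2 → ℝ => f (-θ 0 - θ 1))
      (deriv f (-θ 0 - θ 1) • (-prAux 0 - prAux 1)) θ :=
    (hd (-θ 0 - θ 1)).comp_hasFDerivAt θ hz
  apply hasFDerivAt_pi''
  intro i
  fin_cases i
  · simpa [DmapAux, GmapAux] using (((h0.const_mul 2).sub h1).sub h2).const_mul (3:ℝ)⁻¹
  · simpa [DmapAux, GmapAux] using (((h1.const_mul 2).sub h0).sub h2).const_mul (3:ℝ)⁻¹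

lemma DmapAux_inj (f : ℝ → ℝ) (θ : Fin 2 → ℝ)
    (hsum : 0 < deriv f (θ 0) * deriv f (θ 1) + deriv f (θ 1) * deriv f (-θ 0 - θ 1) +
      deriv f (-θ 0 - θ 1) * deriv f (θ 0)) :
    Function.Injective (DmapAux f θ) := by
  set a := deriv f (θ 0)
  set b := deriv f (θ 1)
  set c := deriv f (-θ 0 - θ 1)
  intro u u' huu'
  have h0 := congrFun huu' 0
  have h1 := congrFun huu' 1
  simp only [DmapAux, prAux, ContinuousLinearMap.pi_apply, Matrix.cons_val_zero,
    Matrix.cons_val_one, Matrix.head_cons, ContinuousLinearMap.smul_apply,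
    ContinuousLinearMap.sub_apply, ContinuousLinearMap.neg_apply,
    ContinuousLinearMap.proj_apply, smul_eq_mul] at h0 h1
  have hp : (a * b + b * c + c * a) * (u 0 - u' 0) = 0 := by
    linear_combination (2 * b + c) * h0 - (c - b) * h1
  have hq : (a * b + b * c + c * a) * (u 1 - u' 1) = 0 := by
    linear_combination (2 * a + c) * h1 - (c - a) * h0
  have h0' : u 0 = u' 0 := by
    rcases mul_eq_zero.mp hp with h | h
    · exact absurd h (ne_of_gt hsum)
    · linarith
  have h1' : u 1 = u' 1 := by
    rcases mul_eq_zero.mp hq with h | h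
    · exact absurd h (ne_of_gt hsum)
    · linarith
  funext i; fin_cases i
  · exact h0'
  · exact h1'

lemma GmapAux_contDiff (f : ℝ → ℝ) (hf : ContDiff ℝ 1 f) : ContDiff ℝ 1 (GmapAux f) := by
  have c0 : ContDiff ℝ 1 (fun θ : Fin 2 → ℝ => θ 0) := (prAux 0).contDiff
  have c1 : ContDiff ℝ 1 (fun θ : Fin 2 → ℝ => θ 1) := (prAux 1).contDiff
  apply contDiff_pi.mpr
  intro i
  fin_cases i <;>
    simp only [GmapAux, Fin.isValue, Fin.mk_zero, Fin.mk_one, Matrix.cons_val_zero,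
      Matrix.cons_val_one, Matrix.head_cons]
  · exact contDiff_const.mul (((contDiff_const.mul (hf.comp c0)).sub (hf.comp c1)).sub
      (hf.comp (c0.neg.sub c1)))
  · exact contDiff_const.mul (((contDiff_const.mul (hf.comp c1)).sub (hf.comp c0)).sub
      (hf.comp (c0.neg.sub c1)))

lemma GmapAux_bij_mono (f : ℝ → ℝ) (hm : StrictMono f) (hs : Function.Surjective f) :
    Function.Bijective (GmapAux f) := by
  constructor
  · intro θ θ' h
    have h0 := congrFun h 0
    have h1 := congrFun h 1
    simp only [GmapAux, Matrix.cons_val_zero, Matrix.cons_val_one, Matrix.head_cons] at h0 h1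
    have e0 : 2 * f (θ 0) - f (θ 1) - f (-θ 0 - θ 1)
        = 2 * f (θ' 0) - f (θ' 1) - f (-θ' 0 - θ' 1) := by
      field_simp at h0; linarith
    have e1 : 2 * f (θ 1) - f (θ 0) - f (-θ 0 - θ 1)
        = 2 * f (θ' 1) - f (θ' 0) - f (-θ' 0 - θ' 1) := by
      field_simp at h1; linarith
    have hxx' : θ 0 = θ' 0 ∧ θ 1 = θ' 1 := by
      rcases lt_trichotomy (f (θ 0) - f (θ' 0)) 0 with hlt | heq | hgt
      · have hx : θ 0 < θ' 0 := hm.lt_iff_lt.mp (by linarith)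
        have hy : θ 1 < θ' 1 := hm.lt_iff_lt.mp (by linarith)
        have hz : -θ 0 - θ 1 < -θ' 0 - θ' 1 := hm.lt_iff_lt.mp (by linarith)
        linarith
      · exact ⟨hm.injective (by linarith), hm.injective (by linarith)⟩
      · have hx : θ' 0 < θ 0 := hm.lt_iff_lt.mp (by linarith)
        have hy : θ' 1 < θ 1 := hm.lt_iff_lt.mp (by linarith)
        have hz : -θ' 0 - θ' 1 < -θ 0 - θ 1 := hm.lt_iff_lt.mp (by linarith)
        linarith
    funext i; fin_cases i
    · exact hxx'.1
    · exact hxx'.2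
  · intro v
    set e : ℝ ≃o ℝ := StrictMono.orderIsoOfSurjective f hm hs with he
    have hef : (e : ℝ → ℝ) = f := StrictMono.coe_orderIsoOfSurjective f hm hs
    set g : ℝ → ℝ := fun s => e.symm s with hg
    have hfg : ∀ s, f (g s) = s := by
      intro s; rw [← hef]; exact e.apply_symm_apply s
    set φ : ℝ → ℝ := fun t => g (v 0 + t) + g (v 1 + t) + g (-v 0 - v 1 + t) with hφ
    have hφc : Continuous φ := by
      have hgc : Continuous g := OrderIso.continuous e.symm
      fun_prop
    set r : ℝ := e 0 with hr
    have hgr : g r = 0 := e.symm_apply_apply 0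
    set t1 : ℝ := max (r - v 0) (max (r - v 1) (r - (-v 0 - v 1))) with ht1
    set t0 : ℝ := min (r - v 0) (min (r - v 1) (r - (-v 0 - v 1))) with ht0
    have ht01 : t0 ≤ t1 := le_trans (min_le_left _ _) (le_max_left _ _)
    have hmono : Monotone g := e.symm.monotone
    have m1 : r - v 0 ≤ t1 := le_max_left _ _
    have m2 : r - v 1 ≤ t1 := le_trans (le_max_left _ _) (le_max_right _ _)
    have m3 : r - (-v 0 - v 1) ≤ t1 := le_trans (le_max_right _ _) (le_max_right _ _)
    have n1 : t0 ≤ r - v 0 := min_le_left _ _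
    have n2 : t0 ≤ r - v 1 := le_trans (min_le_right _ _) (min_le_left _ _)
    have n3 : t0 ≤ r - (-v 0 - v 1) := le_trans (min_le_right _ _) (min_le_right _ _)
    have hφ1 : 0 ≤ φ t1 := by
      have a1 : g r ≤ g (v 0 + t1) := hmono (by linarith)
      have a2 : g r ≤ g (v 1 + t1) := hmono (by linarith)
      have a3 : g r ≤ g (-v 0 - v 1 + t1) := hmono (by linarith)
      rw [hgr] at a1 a2 a3
      simp only [hφ]; linarith
    have hφ0 : φ t0 ≤ 0 := by
      have a1 : g (v 0 + t0) ≤ g r := hmono (by linarith)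
      have a2 : g (v 1 + t0) ≤ g r := hmono (by linarith)
      have a3 : g (-v 0 - v 1 + t0) ≤ g r := hmono (by linarith)
      rw [hgr] at a1 a2 a3
      simp only [hφ]; linarith
    obtain ⟨t, -, htz⟩ : ∃ t ∈ Set.Icc t0 t1, φ t = 0 :=
      intermediate_value_Icc ht01 hφc.continuousOn ⟨hφ0, hφ1⟩
    refine ⟨![g (v 0 + t), g (v 1 + t)], ?_⟩
    have hzeq : -(g (v 0 + t)) - g (v 1 + t) = g (-v 0 - v 1 + t) := by
      simp only [hφ] at htz; linarith
    have hfz : f (-(g (v 0 + t)) - g (v 1 + t)) = -v 0 - v 1 + t := by rw [hzeq, hfg]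
    have hveq : ![v 0, v 1] = v := by funext i; fin_cases i <;> rfl
    rw [← hveq]
    funext i; fin_cases i <;>
      simp only [GmapAux, Fin.isValue, Fin.mk_zero, Fin.mk_one,
        Matrix.cons_val_zero, Matrix.cons_val_one, Matrix.head_cons, hfg, hfz] <;> ring

lemma GmapAux_bij (f : ℝ → ℝ) (hbij : Function.Bijective f)
    (hf' : (∀ x, 0 < deriv f x) ∨ (∀ x, deriv f x < 0)) :
    Function.Bijective (GmapAux f) := by
  rcases hf' with hpos | hneg
  · exact GmapAux_bij_mono f (strictMono_of_deriv_pos hpos) hbij.surjective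
  · have hanti : StrictAnti f := strictAnti_of_deriv_neg hneg
    have hm2 : StrictMono (fun x => -f x) := fun x y hxy => neg_lt_neg (hanti hxy)
    have hs2 : Function.Surjective (fun x => -f x) := by
      intro y
      obtain ⟨x, hx⟩ := hbij.surjective (-y)
      exact ⟨x, by simp [hx]⟩
    have hkey : GmapAux f = (fun w : Fin 2 → ℝ => -w) ∘ GmapAux (fun x => -f x) := by
      funext θ i
      fin_cases i <;>
        simp only [GmapAux, Function.comp_apply, Pi.neg_apply, Fin.isValue, Fin.mk_zero,
          Fin.mk_one, Matrix.cons_val_zero, Matrix.cons_val_one, Matrix.head_cons] <;> ring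
    rw [hkey]
    have hnegbij : Function.Bijective (fun w : Fin 2 → ℝ => -w) :=
      ⟨fun u v h => by simpa using congrArg Neg.neg h, fun w => ⟨-w, neg_neg w⟩⟩
    exact hnegbij.comp (GmapAux_bij_mono _ hm2 hs2)

end Aux

/-- If `f : ℝ → ℝ` is a diffeomorphism whose derivative is
everywhere strictly positive or everywhere strictly negative, then for
`h̃(x,y) = (f x, f y)` the Weyl-averaged map `G` has everywhere nonvanishing
Jacobian determinant `(1/3)(f'(x)f'(y) + f'(y)f'(z) + f'(z)f'(x))` (with
`z = −x−y`), hence is a local diffeomorphism; since `ℝ²` is simply connected,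
`G` is a diffeomorphism of `ℝ²`. -/
theorem weylAverage_is_diffeomorphism (f : ℝ → ℝ)
    (hf : ContDiff ℝ 1 f) (hbij : Function.Bijective f)
    (hf' : (∀ x, 0 < deriv f x) ∨ (∀ x, deriv f x < 0)) :
    (∀ θ : Fin 2 → ℝ,
      (3 : ℝ)⁻¹ * (deriv f (θ 0) * deriv f (θ 1) +
        deriv f (θ 1) * deriv f (-θ 0 - θ 1) +
        deriv f (-θ 0 - θ 1) * deriv f (θ 0)) ≠ 0) ∧
    Function.Bijective (weylAverage (fun θ i => f (θ i))) ∧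
    ContDiff ℝ 1 (weylAverage (fun θ i => f (θ i))) ∧
    ContDiff ℝ 1 (Function.invFun (weylAverage (fun θ i => f (θ i)))) := by
  have hsum : ∀ θ : Fin 2 → ℝ,
      0 < deriv f (θ 0) * deriv f (θ 1) + deriv f (θ 1) * deriv f (-θ 0 - θ 1) +
        deriv f (-θ 0 - θ 1) * deriv f (θ 0) := by
    intro θ
    apply sum_prod_posAux
    rcases hf' with hpos | hneg
    · exact Or.inl ⟨hpos _, hpos _, hpos _⟩
    · exact Or.inr ⟨hneg _, hneg _, hneg _⟩
  rw [weylAverage_eqAux f]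
  have hGbij : Function.Bijective (GmapAux f) := GmapAux_bij f hbij hf'
  have hGcd : ContDiff ℝ 1 (GmapAux f) := GmapAux_contDiff f hf
  refine ⟨fun θ => ne_of_gt (mul_pos (by norm_num) (hsum θ)), hGbij, hGcd, ?_⟩
  -- smoothness of the inverse
  rw [contDiff_iff_contDiffAt]
  intro y
  obtain ⟨a, rfl⟩ := hGbij.surjective y
  -- invertible derivative at `a`
  have hinj := DmapAux_inj f a (hsum a)
  have hDbij : Function.Bijective ((DmapAux f a).toLinearMap) :=
    ⟨hinj, LinearMap.injective_iff_surjective.mp hinj⟩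
  let L : (Fin 2 → ℝ) ≃ₗ[ℝ] (Fin 2 → ℝ) :=
    LinearEquiv.ofBijective (DmapAux f a).toLinearMap hDbij
  let Φ : (Fin 2 → ℝ) ≃L[ℝ] (Fin 2 → ℝ) := L.toContinuousLinearEquiv
  have hfd : HasFDerivAt (GmapAux f) ((Φ : (Fin 2 → ℝ) →L[ℝ] (Fin 2 → ℝ))) a := by
    have : (Φ : (Fin 2 → ℝ) →L[ℝ] (Fin 2 → ℝ)) = DmapAux f a := by
      ext u
      rfl
    rw [this]
    exact GmapAux_hasFDerivAt f hf a
  have hca : ContDiffAt ℝ 1 (GmapAux f) a := hGcd.contDiffAt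
  have hcd := hca.to_localInverse (f' := Φ) hfd one_ne_zero
  apply hcd.congr_of_eventuallyEq
  have hev := (hca.hasStrictFDerivAt' (f' := Φ) hfd one_ne_zero).eventually_right_inverse
  refine hev.mono fun y hy => ?_
  calc Function.invFun (GmapAux f) y
      = Function.invFun (GmapAux f)
        (GmapAux f ((hca.hasStrictFDerivAt' (f' := Φ) hfd one_ne_zero).localInverse
          (GmapAux f) Φ a y)) := by rw [hy]
    _ = (hca.hasStrictFDerivAt' (f' := Φ) hfd one_ne_zero).localInverse (GmapAux f) Φ a y :=
        Function.leftInverse_invFun hGbij.injective _
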